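/- For λ = (r^c, t) with 0 < t ≤ r a partition of n, a map from the staircase word condition gives a bijection: cylindric semistandard Young tableaux of shape (r^c t)/∅/1 with content μ are in bijection with the single filling when μ_1 ≤ r, and there are none when μ_1 > r. Equivalently, the number of CSSYT of shape (r^c t)/∅/1 and content μ is 1 if μ_1 ≤ r and 0 otherwise. -/

import Mathlib

open MvPolynomial
open scoped Classical

noncomputable section

/-- A poset is `(3+1)`-free: no induced subposet consisting of a 3-chain
together with an element incomparable to all of it. -/
def ThreePlusOneFree (P : Type*) [PartialOrder P] : Prop :=
  ¬ ∃ a b c x : P, a < b ∧ b < c ∧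
    ¬(x ≤ a ∨ a ≤ x) ∧ ¬(x ≤ b ∨ b ≤ x) ∧ ¬(x ≤ c ∨ c ≤ x)

/-- The `P`-elementary function `e_k^P(u)`, the sum of `u_{i_1} ⋯ u_{i_k}`
over strict chains `i_1 <_P ⋯ <_P i_k`. -/
def eP (P : Type*) [Fintype P] [PartialOrder P] (k : ℕ) : MvPolynomial P ℤ :=
  ∑ f ∈ Finset.univ.filter (fun f : Fin k → P => ∀ a b : Fin k, a < b → f a < f b),
    ∏ i, X (f i)

/-- `e_k^P` for an integer index, vanishing for negative `k`. -/
def ePz (P : Type*) [Fintype P] [PartialOrder P] (k : ℤ) : MvPolynomial P ℤ :=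
  if 0 ≤ k then eP P k.toNat else 0

/-- Conjugate partition: `conj f c` is the length of column `c` (0-indexed)
of the diagram of `f`. -/
def conj (f : ℕ → ℕ) (c : ℕ) : ℕ := Set.ncard {i | c < f i}

/-- `f : ℕ → ℕ` (0-indexed list of parts) is a partition. -/
def IsPartition (f : ℕ → ℕ) : Prop := (∀ i, f (i + 1) ≤ f i) ∧ ∃ N, ∀ i, N ≤ i → f i = 0

/-- `λ/μ/d` is a cylindric shape. -/
def IsCylShape (lam mu : ℕ → ℕ) (d : ℕ) : Prop :=
  IsPartition lam ∧ IsPartition mu ∧ (∀ i, mu i ≤ lam i) ∧ 0 < lam 0 ∧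
    conj lam 0 ≤ conj lam (lam 0 - 1) + d ∧
    conj mu 0 ≤ conj mu (lam 0 - 1) + d ∧ d ≤ conj lam 0

section Arrays
variable {P : Type*} [PartialOrder P]

/-- Column-strictness of the array `A` (a total function; only values on the cells
of the shape `col(α,β)`, over `l` columns, matter): entries strictly increase
down each column. This is the defining condition for a `P`-array. -/
def ColStrict (A : ℕ → ℕ → P) (l : ℕ) (α β : ℕ → ℕ) : Prop :=
  ∀ c r r', c < l → β c ≤ r → r < r' → r' < α c → A r c < A r' c

/-- `col(α,β)` (with `β` a partition) is a skew partition shape. -/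
def IsSkewShape (l : ℕ) (α β : ℕ → ℕ) : Prop :=
  (∀ c, c + 1 < l → α (c + 1) ≤ α c ∧ β (c + 1) ≤ β c) ∧ ∀ c, c < l → β c ≤ α c

/-- Rows of `A` are weakly increasing in `P`: no entry is `>_P` its right neighbour. -/
def RowWeak (A : ℕ → ℕ → P) (l : ℕ) (α β : ℕ → ℕ) : Prop :=
  ∀ r c, c + 1 < l → β c ≤ r → r < α c → β (c + 1) ≤ r → r < α (c + 1) →
    ¬ A r (c + 1) < A r c

/-- `A` is a `P`-tableau of shape `col(α,β)`. -/
def IsPTableau (A : ℕ → ℕ → P) (l : ℕ) (α β : ℕ → ℕ) : Prop :=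
  IsSkewShape l α β ∧ ColStrict A l α β ∧ RowWeak A l α β

/-- The glued array `A^d`: columns `0,…,l-1` of `A` shifted down by `d`, and a copy
of column `0` of `A` as the extra column `l`. -/
def glueArr (A : ℕ → ℕ → P) (l d : ℕ) : ℕ → ℕ → P :=
  fun r c => if c < l then A (r - d) c else A r 0

/-- Column lengths of the glued shape. -/
def glueCol (f : ℕ → ℕ) (l d : ℕ) : ℕ → ℕ :=
  fun c => if c < l then f c + d else f 0

/-- `(r,j)` is an intersection point of columns `i < j` of `A`
(shape `col(α,β)`), with witness in column `i`. -/
def IsIntPoint (A : ℕ → ℕ → P) (α β : ℕ → ℕ) (i j r : ℕ) : Prop :=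
  i < j ∧ β j ≤ r ∧ r < α j ∧
    ∃ w, w + j = r + 1 + i ∧ β i ≤ w ∧ (α i ≤ w ∨ A r j < A w i)

/-- Columns `i < j` of `A` intersect. -/
def Intersecting (A : ℕ → ℕ → P) (α β : ℕ → ℕ) (i j : ℕ) : Prop :=
  ∃ r, IsIntPoint A α β i j r

/-- `(r,j)` is a `P`-minimal intersection point of the array `A` with columns `0,…,L`. -/
def PMinIP (A : ℕ → ℕ → P) (α β : ℕ → ℕ) (L j r : ℕ) : Prop :=
  j ≤ L ∧ (∃ i, IsIntPoint A α β i j r) ∧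
    ∀ j' r' i', j' ≤ L → IsIntPoint A α β i' j' r' → ¬ A r' j' < A r j

/-- `(r,j)` is the rightmost `P`-minimal intersection point. -/
def RightmostPMinIP (A : ℕ → ℕ → P) (α β : ℕ → ℕ) (L j r : ℕ) : Prop :=
  PMinIP A α β L j r ∧ ∀ j' r', PMinIP A α β L j' r' → j' ≤ j

/-- The cylindric swap `swap(A,i,j,d)` at the `P`-minimal intersection point `m` of
columns `i < j ≤ l` of `A^d` (the minimal intersection point is the lowest-row one,
since column `j` is a chain).  Everything is in the coordinates of `A`; the case
`j = l` is the wrap-around case, where entries move between column `i` and column `0`. -/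
def swapArr (A : ℕ → ℕ → P) (l d i j : ℕ) (α β : ℕ → ℕ) : ℕ → ℕ → P :=
  let m := sInf {r | IsIntPoint (glueArr A l d) (glueCol α l d) (glueCol β l d) i j r}
  if j < l then
    fun r c =>
      if c = i ∧ m + 1 + i ≤ r + j + d then A (r + (j - i)) j
      else if c = j ∧ m + 1 ≤ r + d then A (r - (j - i)) i
      else A r c
  else
    fun r c =>
      if c = i ∧ m + 1 + i ≤ r + j + d then A (r + (j - i) + d) 0
      else if c = 0 ∧ m + 1 ≤ r then A (r - (d + (j - i))) i
      else A r c

end Arrays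

/-- A cylindric `P`-tableau of shape `λ/μ/d`, encoded column by column:
`T c p` is the entry of column `c` in the `p`-th cell from the top
(global row `conj μ c + p`).  The condition is that the glued filling `T^d`
is a `P`-tableau: the glued shape is a skew shape, columns strictly increase
in `P`, and rows (including the wrap-around adjacency between the last column
and the copy of column `0` shifted up by `d`) weakly increase in `P`. -/
def IsCylTab {P : Type*} [PartialOrder P] (lam mu : ℕ → ℕ) (d : ℕ)
    (T : ∀ c : Fin (lam 0), Fin (conj lam c - conj mu c) → P) : Prop :=
  (∀ c, c + 1 < lam 0 → conj lam (c + 1) ≤ conj lam c ∧ conj mu (c + 1) ≤ conj mu c) ∧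
  (∀ c, c < lam 0 → conj mu c ≤ conj lam c) ∧
  (0 < lam 0 → conj lam 0 ≤ conj lam (lam 0 - 1) + d ∧ conj mu 0 ≤ conj mu (lam 0 - 1) + d) ∧
  (∀ c p q, p < q → T c p < T c q) ∧
  (∀ (c : Fin (lam 0)) (hc : c.1 + 1 < lam 0)
      (p : Fin (conj lam c.1 - conj mu c.1)) (q : Fin (conj lam (c.1 + 1) - conj mu (c.1 + 1))),
      conj mu c.1 + p.1 = conj mu (c.1 + 1) + q.1 → ¬ T ⟨c.1 + 1, hc⟩ q < T c p) ∧
  (∀ (h0 : 0 < lam 0) (p : Fin (conj lam (lam 0 - 1) - conj mu (lam 0 - 1)))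
      (q : Fin (conj lam 0 - conj mu 0)),
      conj mu (lam 0 - 1) + p.1 + d = conj mu 0 + q.1 →
      ¬ T ⟨0, h0⟩ q < T ⟨lam 0 - 1, Nat.sub_lt h0 Nat.one_pos⟩ p)

/-- The `u`-monomial weight `u^T` of a tableau. -/
def uT {P : Type*} (lam mu : ℕ → ℕ)
    (T : ∀ c : Fin (lam 0), Fin (conj lam c - conj mu c) → P) : MvPolynomial P ℤ :=
  ∏ c, ∏ p, X (T c p)

/-- Number of occurrences of the value `x` in the tableau `T`. -/
def tabCount {P : Type*} (lam mu : ℕ → ℕ)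
    (T : ∀ c : Fin (lam 0), Fin (conj lam c - conj mu c) → P) (x : P) : ℕ :=
  ∑ c, (Finset.univ.filter (fun p => T c p = x)).card

/-- `T` is standard: it contains each element of `P` exactly once. -/
def IsStandardTab {P : Type*} (lam mu : ℕ → ℕ)
    (T : ∀ c : Fin (lam 0), Fin (conj lam c - conj mu c) → P) : Prop :=
  ∀ x : P, tabCount lam mu T x = 1

/-- The chromatic symmetric polynomial of the incomparability graph `inc(P)`,
in the variables `x_0, …, x_{N-1}`. -/
def chromPoly (P : Type*) [Fintype P] [PartialOrder P] (N : ℕ) : MvPolynomial (Fin N) ℤ :=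
  ∑ κ ∈ Finset.univ.filter
      (fun κ : P → Fin N => ∀ a b : P, a ≠ b → ¬(a ≤ b ∨ b ≤ a) → κ a ≠ κ b),
    ∏ v, X (κ v)

end


namespace Stmt11Aux


/-- Partial sums of `mu`. -/
def S (mu : ℕ → ℕ) (v : ℕ) : ℕ := ∑ i ∈ Finset.range v, mu i

/-- The sorted word with content `mu`. -/
noncomputable def aw (mu : ℕ → ℕ) (k : ℕ) : ℕ := sInf {v | k < S mu (v + 1)}

variable {mu : ℕ → ℕ} {n : ℕ}

theorem S_mono : Monotone (S mu) := by
  intro v w hvw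
  exact Finset.sum_le_sum_of_subset (Finset.range_subset_range.2 hvw)

theorem S_succ (v : ℕ) : S mu (v + 1) = S mu v + mu v := Finset.sum_range_succ _ _

section
variable (hN : ∃ N, ∀ M, N ≤ M → S mu M = n)
include hN

theorem S_le (M : ℕ) : S mu M ≤ n := by
  obtain ⟨N, hSN⟩ := hN
  calc S mu M ≤ S mu (max M N) := S_mono (le_max_left _ _)
  _ = n := hSN _ (le_max_right _ _)

theorem aw_spec {k : ℕ} (hk : k < n) :
    S mu (aw mu k) ≤ k ∧ k < S mu (aw mu k + 1) := by
  obtain ⟨N, hSN⟩ := hN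
  have hne : ∃ v, v ∈ {v | k < S mu (v + 1)} := ⟨N, by simpa [hSN (N + 1) (by omega)] using hk⟩
  have hmem := Nat.sInf_mem hne
  refine ⟨?_, hmem⟩
  rcases Nat.eq_zero_or_pos (aw mu k) with h0 | h0
  · simp [h0, S]
  · by_contra hlt
    push_neg at hlt
    have hmem2 : aw mu k - 1 ∈ {v | k < S mu (v + 1)} := by
      show k < S mu (aw mu k - 1 + 1)
      rw [Nat.sub_add_cancel h0]
      omega
    have h5 : aw mu k ≤ aw mu k - 1 := Nat.sInf_le hmem2
    omega

theorem aw_char {k : ℕ} (hk : k < n) (v : ℕ) : aw mu k < v ↔ k < S mu v := by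
  obtain ⟨h1, h2⟩ := aw_spec hN hk
  constructor
  · intro h
    exact lt_of_lt_of_le h2 (S_mono h)
  · intro h
    rcases Nat.eq_zero_or_pos v with rfl | hv
    · simp [S] at h
    · by_contra hge
      push_neg at hge
      have : S mu v ≤ S mu (aw mu k) := S_mono hge
      omega

end

/-- Characterization of any weakly increasing word with content `mu`. -/
theorem word_char {w : ℕ → ℕ}
    (hmono : ∀ k, k + 1 < n → w k ≤ w (k + 1))
    (hcnt : ∀ v, ((Finset.range n).filter (fun k => w k = v)).card = mu v)
    {k : ℕ} (hk : k < n) (v : ℕ) : w k < v ↔ k < S mu v := by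
  have hm : ∀ kk, kk < n → ∀ j, j ≤ kk → w j ≤ w kk := by
    intro kk
    induction kk with
    | zero => intro _ j hj; rw [Nat.le_zero.1 hj]
    | succ m ih =>
      intro hlt j hj
      rcases Nat.eq_or_lt_of_le hj with rfl | hj'
      · exact le_rfl
      · exact le_trans (ih (by omega) j (by omega)) (hmono m hlt)
  have hcard : ((Finset.range n).filter (fun k => w k < v)).card = S mu v := by
    have hfib := Finset.card_eq_sum_card_fiberwise
      (f := w) (s := (Finset.range n).filter (fun k => w k < v)) (t := Finset.range v)
      (by intro x hx; simp only [Finset.mem_coe, Finset.mem_filter] at hx; exact Finset.mem_range.2 hx.2)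
    rw [hfib]
    rw [show S mu v = ∑ b ∈ Finset.range v, mu b from rfl]
    refine Finset.sum_congr rfl fun b hb => ?_
    rw [← hcnt b]
    congr 1
    ext x
    simp only [Finset.mem_filter, Finset.mem_range] at *
    constructor
    · rintro ⟨⟨h1, _⟩, h3⟩; exact ⟨h1, h3⟩
    · rintro ⟨h1, h3⟩; exact ⟨⟨h1, h3 ▸ hb⟩, h3⟩
  constructor
  · intro h
    have hsub : Finset.range (k + 1) ⊆ (Finset.range n).filter (fun j => w j < v) := by
      intro j hj
      simp only [Finset.mem_range] at hj
      simp only [Finset.mem_filter, Finset.mem_range]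
      exact ⟨by omega, lt_of_le_of_lt (hm k hk j (by omega)) h⟩
    have := Finset.card_le_card hsub
    simpa [hcard] using this
  · intro h
    by_contra hge
    push_neg at hge
    have hsub : (Finset.range n).filter (fun j => w j < v) ⊆ Finset.range k := by
      intro j hj
      simp only [Finset.mem_filter, Finset.mem_range] at hj ⊢
      by_contra hjk
      push_neg at hjk
      have := hm j hj.1 k hjk
      omega
    have := Finset.card_le_card hsub
    simp only [hcard, Finset.card_range] at this
    omega

/-- Uniqueness: any weakly increasing word with content `mu` equals `aw mu`. -/
theorem word_eq_aw (hN : ∃ N, ∀ M, N ≤ M → S mu M = n) {w : ℕ → ℕ}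
    (hmono : ∀ k, k + 1 < n → w k ≤ w (k + 1))
    (hcnt : ∀ v, ((Finset.range n).filter (fun k => w k = v)).card = mu v)
    {k : ℕ} (hk : k < n) : w k = aw mu k := by
  have h1 := word_char (n := n) hmono hcnt hk
  have h2 := aw_char hN hk
  have ha : w k < aw mu k + 1 := (h1 _).2 ((h2 _).1 (by omega))
  have hb : aw mu k < w k + 1 := (h2 _).2 ((h1 _).1 (by omega))
  omega

theorem aw_mono (hN : ∃ N, ∀ M, N ≤ M → S mu M = n)
    {j k : ℕ} (hj : j ≤ k) (hk : k < n) : aw mu j ≤ aw mu k := by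
  have h2 := (aw_spec hN hk).2
  have := (aw_char hN (lt_of_le_of_lt hj hk) (aw mu k + 1)).2 (by omega)
  omega

theorem aw_counts (hN : ∃ N, ∀ M, N ≤ M → S mu M = n) (v : ℕ) :
    ((Finset.range n).filter (fun k => aw mu k = v)).card = mu v := by
  have : (Finset.range n).filter (fun k => aw mu k = v) = Finset.Ico (S mu v) (S mu (v + 1)) := by
    ext k
    simp only [Finset.mem_filter, Finset.mem_range, Finset.mem_Ico]
    constructor
    · rintro ⟨hk, rfl⟩
      exact ⟨(aw_spec hN hk).1, (aw_spec hN hk).2⟩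
    · rintro ⟨h1, h2⟩
      have hk : k < n := lt_of_lt_of_le h2 (S_le hN _)
      have ha := (aw_char hN hk (v + 1)).2 h2
      have hb := (aw_char hN hk v)
      constructor
      · exact hk
      · rcases lt_or_ge (aw mu k) v with h | h
        · exact absurd (hb.1 h) (by omega)
        · omega
    
  rw [this, Nat.card_Ico, S_succ]
  omega

theorem aw_strict (hN : ∃ N, ∀ M, N ≤ M → S mu M = n) {R : ℕ}
    (hr : ∀ v, mu v ≤ R) {k : ℕ} (hk : k + R < n) : aw mu k < aw mu (k + R) := by
  by_contra hge
  push_neg at hge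
  have h2 := (aw_spec hN (show k < n by omega)).1
  have h3 := (aw_spec hN hk).2
  rw [S_succ] at h3
  have hle : S mu (aw mu (k + R)) ≤ S mu (aw mu k) := S_mono hge
  have := hr (aw mu (k + R))
  omega

theorem mu_le_mu_zero (hmu : ∀ i, mu (i + 1) ≤ mu i) (v : ℕ) : mu v ≤ mu 0 := by
  induction v with
  | zero => exact le_rfl
  | succ m ih => exact le_trans (hmu m) ih



theorem conj_zero (col : ℕ) : conj (fun _ : ℕ => 0) col = 0 := by
  have h : {i : ℕ | col < (fun _ : ℕ => 0) i} = ∅ := by ext i; simp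
  unfold conj
  rw [h]
  exact Set.ncard_empty ℕ

variable {r c t : ℕ} {lam : ℕ → ℕ}

theorem lam_zero (hlam : ∀ i, lam i = if i < c then r else if i = c then t else 0) :
    lam 0 = if 0 < c then r else t := by
  rw [hlam]
  rcases Nat.eq_zero_or_pos c with rfl | hc
  · simp
  · simp [hc, Nat.pos_iff_ne_zero.1 hc, (by omega : 0 ≠ c)]

theorem conj_lam (hlam : ∀ i, lam i = if i < c then r else if i = c then t else 0)
    (ht : 0 < t) (htr : t ≤ r) {col : ℕ} (hcol : col < lam 0) :
    conj lam col = if col < t then c + 1 else c := by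
  have hR := lam_zero hlam
  by_cases hct : col < t
  · have h : {i : ℕ | col < lam i} = Set.Iic c := by
      ext i
      simp only [Set.mem_setOf_eq, Set.mem_Iic, hlam i]
      split_ifs with h1 h2 <;> omega
    unfold conj
    rw [h, ← Finset.coe_Iic, Set.ncard_coe_finset, Nat.card_Iic]
    simp [hct]
  · have hc : 0 < c := by
      by_contra h0
      rw [hR] at hcol
      simp [Nat.eq_zero_of_not_pos h0] at hcol
      omega
    have hcr : col < r := by rw [hR, if_pos hc] at hcol; exact hcol
    have h : {i : ℕ | col < lam i} = Set.Iio c := by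
      ext i
      simp only [Set.mem_setOf_eq, Set.mem_Iio, hlam i]
      split_ifs with h1 h2 <;> omega
    unfold conj
    rw [h, ← Finset.coe_Iio, Set.ncard_coe_finset, Nat.card_Iio]
    simp [hct]

theorem idx_iff (hlam : ∀ i, lam i = if i < c then r else if i = c then t else 0)
    (ht : 0 < t) (htr : t ≤ r) {col : ℕ} (hcol : col < lam 0) (p : ℕ) :
    p * lam 0 + col < r * c + t ↔ p < conj lam col := by
  have hR := lam_zero hlam
  rw [conj_lam hlam ht htr hcol]
  rcases Nat.eq_zero_or_pos c with rfl | hc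
  · have hR0 : lam 0 = t := by simpa using hR
    rw [hR0] at hcol ⊢
    rw [if_pos hcol]
    constructor
    · intro h
      by_contra hp
      push_neg at hp
      have h1 : 1 * t ≤ p * t := Nat.mul_le_mul_right t (by omega)
      omega
    · intro h
      have hp0 : p = 0 := by omega
      subst hp0
      omega
  · rw [hR, if_pos hc] at hcol ⊢
    by_cases hct : col < t
    · rw [if_pos hct]
      constructor
      · intro h
        by_contra hp
        push_neg at hp
        have h1 : (c + 1) * r ≤ p * r := Nat.mul_le_mul_right r hp
        have h2 : (c + 1) * r = c * r + r := by ring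
        have h3 : c * r = r * c := Nat.mul_comm c r
        omega
      · intro h
        have h1 : p * r ≤ c * r := Nat.mul_le_mul_right r (by omega)
        have h3 : c * r = r * c := Nat.mul_comm c r
        omega
    · rw [if_neg hct]
      obtain ⟨m, rfl⟩ : ∃ m, c = m + 1 := ⟨c - 1, by omega⟩
      constructor
      · intro h
        by_contra hp
        push_neg at hp
        have h1 : (m + 1) * r ≤ p * r := Nat.mul_le_mul_right r hp
        have h2 : (m + 1) * r = m * r + r := by ring
        have h3 : (m + 1) * r = r * (m + 1) := Nat.mul_comm _ _
        omega
      · intro h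
        have h1 : p * r ≤ m * r := Nat.mul_le_mul_right r (by omega)
        have h2 : (m + 1) * r = m * r + r := by ring
        have h3 : (m + 1) * r = r * (m + 1) := Nat.mul_comm _ _
        omega


theorem mod_helper {R col : ℕ} (p : ℕ) (hcol : col < R) : (p * R + col) % R = col := by
  rw [Nat.add_comm, Nat.add_mul_mod_self_right, Nat.mod_eq_of_lt hcol]

theorem div_helper {R col : ℕ} (p : ℕ) (hR0 : 0 < R) (hcol : col < R) :
    (p * R + col) / R = p := by
  rw [Nat.add_comm, Nat.add_mul_div_right _ _ hR0, Nat.div_eq_of_lt hcol, Nat.zero_add]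

theorem T_congr (lam : ℕ → ℕ)
    (T : ∀ col : Fin (lam 0), Fin (conj lam col - conj (fun _ => 0) col) → ℕ)
    {c1 c2 : Fin (lam 0)} (h : c1.1 = c2.1)
    {p1 : Fin (conj lam c1 - conj (fun _ => 0) c1)}
    {p2 : Fin (conj lam c2 - conj (fun _ => 0) c2)} (hp : p1.1 = p2.1) :
    T c1 p1 = T c2 p2 := by
  have h2 : c1 = c2 := Fin.ext h
  subst h2
  have h3 : p1 = p2 := Fin.ext hp
  subst h3
  rfl

/-- The reading word of a tableau. -/
noncomputable def wT (lam : ℕ → ℕ) (n : ℕ) (hR0 : 0 < lam 0)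
    (hn : ∀ k, k < n → k / lam 0 < conj lam (k % lam 0) - conj (fun _ => 0) (k % lam 0))
    (T : ∀ col : Fin (lam 0), Fin (conj lam col - conj (fun _ => 0) col) → ℕ) (k : ℕ) : ℕ :=
  if h : k < n then T ⟨k % lam 0, Nat.mod_lt k hR0⟩ ⟨k / lam 0, hn k h⟩ else 0

theorem tabCount_eq (lam : ℕ → ℕ) (n : ℕ) (hR0 : 0 < lam 0)
    (hn : ∀ k, k < n → k / lam 0 < conj lam (k % lam 0) - conj (fun _ => 0) (k % lam 0))
    (T : ∀ col : Fin (lam 0), Fin (conj lam col - conj (fun _ => 0) col) → ℕ)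
    (hbij : ∀ col : Fin (lam 0), ∀ p : ℕ,
      (p * lam 0 + col.1 < n ↔ p < conj lam col.1 - conj (fun _ => 0) col.1))
    (v : ℕ) :
    tabCount lam (fun _ => 0) T v
      = ((Finset.range n).filter (fun k => wT lam n hR0 hn T k = v)).card := by
  classical
  set s := (Finset.range n).filter (fun k => wT lam n hR0 hn T k = v) with hs
  have hfib := Finset.card_eq_sum_card_fiberwise
    (f := fun k => k % lam 0) (s := s) (t := Finset.range (lam 0))
    (by intro x _; exact Finset.mem_range.2 (Nat.mod_lt x hR0))
  rw [hfib, tabCount, ← Fin.sum_univ_eq_sum_range (fun b => (s.filter (fun k => k % lam 0 = b)).card)]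
  refine Finset.sum_congr rfl fun col _ => ?_
  refine Finset.card_bij' (fun p _ => p.1 * lam 0 + col.1)
    (fun k hk => ⟨k / lam 0, ?_⟩) ?_ ?_ ?_ ?_
  · -- membership proof used in j
    simp only [hs, Finset.mem_filter, Finset.mem_range] at hk
    have := hn k hk.1.1
    rwa [hk.2] at this
  · -- hi : image in t
    intro p hp
    simp only [Finset.mem_filter] at hp
    have hlt : p.1 * lam 0 + col.1 < n := (hbij col p.1).2 p.2
    simp only [hs, Finset.mem_filter, Finset.mem_range]
    refine ⟨⟨hlt, ?_⟩, ?_⟩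
    · rw [wT, dif_pos hlt, ← hp.2]
      exact T_congr lam T (mod_helper p.1 col.2) (div_helper p.1 hR0 col.2)
    · exact mod_helper p.1 col.2
  · -- hj : image in s
    intro k hk
    simp only [hs, Finset.mem_filter, Finset.mem_range] at hk
    simp only [Finset.mem_filter, Finset.mem_univ, true_and]
    have heq := hk.1.2
    rw [wT, dif_pos hk.1.1] at heq
    exact (T_congr lam T (c2 := ⟨k % lam 0, Nat.mod_lt k hR0⟩) hk.2.symm rfl).trans heq
  · -- left inverse
    intro p hp
    apply Fin.ext
    exact div_helper p.1 hR0 col.2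
  · -- right inverse
    intro k hk
    simp only [hs, Finset.mem_filter, Finset.mem_range] at hk
    show k / lam 0 * lam 0 + (col : ℕ) = k
    rw [← hk.2]
    exact Nat.div_add_mod' k (lam 0)

end Stmt11Aux

/-- the number of cylindric semistandard Young tableaux of shape
`(r^c t)/∅/1` (entries in the total order `ℕ`) with content `μ` (the value `v`
occurring `μ v` times, `μ` a partition of `n = rc + t`) is `1` if `μ₁ ≤ r` and `0`
otherwise. -/
theorem stmt_11 (r c t : ℕ) (ht : 0 < t) (htr : t ≤ r)
    (mu : ℕ → ℕ) (hmu : IsPartition mu) (hsum : ∑ᶠ v, mu v = r * c + t) :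
    Nat.card {T : ∀ col : Fin ((fun i => if i < c then r else if i = c then t else 0) 0),
          Fin (conj (fun i => if i < c then r else if i = c then t else 0) col
            - conj (fun _ => 0) col) → ℕ //
        IsCylTab (fun i => if i < c then r else if i = c then t else 0) (fun _ => 0) 1 T ∧
        ∀ v : ℕ, tabCount (fun i => if i < c then r else if i = c then t else 0)
            (fun _ => 0) T v = mu v}
      = if mu 0 ≤ r then 1 else 0 := by
  classical
  set lam : ℕ → ℕ := fun i => if i < c then r else if i = c then t else 0 with hlamdef
  have hlam : ∀ i, lam i = if i < c then r else if i = c then t else 0 := fun i => rfl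
  have hR : lam 0 = if 0 < c then r else t := Stmt11Aux.lam_zero hlam
  have hR0 : 0 < lam 0 := by rw [hR]; split <;> omega
  have hRler : lam 0 ≤ r := by rw [hR]; split <;> omega
  have hcz : ∀ col, conj (fun _ : ℕ => 0) col = 0 := Stmt11Aux.conj_zero
  have hconj : ∀ col : ℕ, col < lam 0 → conj lam col = if col < t then c + 1 else c :=
    fun col hcol => Stmt11Aux.conj_lam hlam ht htr hcol
  have hidx : ∀ col : ℕ, col < lam 0 → ∀ p : ℕ,
      (p * lam 0 + col < r * c + t ↔ p < conj lam col) :=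
    fun col hcol p => Stmt11Aux.idx_iff hlam ht htr hcol p
  have hidx' : ∀ col : Fin (lam 0), ∀ p : ℕ,
      (p * lam 0 + col.1 < r * c + t ↔ p < conj lam col.1 - conj (fun _ => 0) col.1) := by
    intro col p
    rw [hcz, Nat.sub_zero]
    exact hidx col.1 col.2 p
  have hnn : ∀ k, k < r * c + t →
      k / lam 0 < conj lam (k % lam 0) - conj (fun _ => 0) (k % lam 0) := by
    intro k hk
    rw [hcz, Nat.sub_zero]
    have h := (hidx (k % lam 0) (Nat.mod_lt k hR0) (k / lam 0)).1
    rw [Nat.div_add_mod' k (lam 0)] at h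
    exact h hk
  have hNex : ∃ N, ∀ M, N ≤ M → Stmt11Aux.S mu M = r * c + t := by
    obtain ⟨N, hN⟩ := hmu.2
    refine ⟨N, fun M hM => ?_⟩
    rw [← hsum]
    refine (finsum_eq_sum_of_support_subset mu ?_).symm
    intro v hv
    simp only [Finset.coe_range, Set.mem_Iio]
    by_contra hvM
    exact hv (hN v (by omega))
  have hS1 : Stmt11Aux.S mu 1 = mu 0 := by simp [Stmt11Aux.S]
  have hcc1 : ∀ a b x : ℕ, conj (fun _ : ℕ => 0) a + x = conj (fun _ : ℕ => 0) b + x := by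
    intro a b x
    rw [hcz, hcz]
  have hcc2 : ∀ a b x : ℕ,
      conj (fun _ : ℕ => 0) a + x + 1 = conj (fun _ : ℕ => 0) b + (x + 1) := by
    intro a b x
    rw [hcz, hcz]
    omega
  have hidxT : ∀ (col : Fin (lam 0)) (p : Fin (conj lam col.1 - conj (fun _ => 0) col.1)),
      p.1 * lam 0 + col.1 < r * c + t := fun col p => (hidx' col p.1).2 p.2
  have hwTval : ∀ (T : ∀ col : Fin (lam 0), Fin (conj lam col - conj (fun _ => 0) col) → ℕ)
      (col : Fin (lam 0)) (p : Fin (conj lam col.1 - conj (fun _ => 0) col.1)),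
      Stmt11Aux.wT lam (r * c + t) hR0 hnn T (p.1 * lam 0 + col.1) = T col p := by
    intro T col p
    rw [Stmt11Aux.wT, dif_pos (hidxT col p)]
    exact Stmt11Aux.T_congr lam T (Stmt11Aux.mod_helper p.1 col.2)
      (Stmt11Aux.div_helper p.1 hR0 col.2)
  -- master lemma about any tableau in the set
  have main : ∀ T : ∀ col : Fin (lam 0), Fin (conj lam col - conj (fun _ => 0) col) → ℕ,
      IsCylTab lam (fun _ => 0) 1 T →
      (∀ v, tabCount lam (fun _ => 0) T v = mu v) →
      (∀ k, k < r * c + t → Stmt11Aux.wT lam (r * c + t) hR0 hnn T k = Stmt11Aux.aw mu k) ∧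
      (∀ k, k + lam 0 < r * c + t →
        Stmt11Aux.wT lam (r * c + t) hR0 hnn T k
          < Stmt11Aux.wT lam (r * c + t) hR0 hnn T (k + lam 0)) := by
    intro T hT hcnt
    obtain ⟨hs1, hs2, hs3, hcol, hrow, hwrap⟩ := hT
    have hstrict : ∀ k, k + lam 0 < r * c + t →
        Stmt11Aux.wT lam (r * c + t) hR0 hnn T k
          < Stmt11Aux.wT lam (r * c + t) hR0 hnn T (k + lam 0) := by
      intro k hk
      have hkn : k < r * c + t := by omega
      have hmod : (k + lam 0) % lam 0 = k % lam 0 := Nat.add_mod_right k (lam 0)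
      have hdiv : (k + lam 0) / lam 0 = k / lam 0 + 1 := Nat.add_div_right k hR0
      have hq : k / lam 0 + 1 < conj lam (k % lam 0) - conj (fun _ => 0) (k % lam 0) := by
        have := hnn (k + lam 0) hk
        rwa [hmod, hdiv] at this
      rw [Stmt11Aux.wT, dif_pos hkn, Stmt11Aux.wT, dif_pos hk]
      exact lt_of_lt_of_eq
        (hcol ⟨k % lam 0, Nat.mod_lt k hR0⟩ ⟨k / lam 0, hnn k hkn⟩ ⟨k / lam 0 + 1, hq⟩
          (Nat.lt_succ_self _))
        (Stmt11Aux.T_congr lam T hmod.symm hdiv.symm)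
    have hmono : ∀ k, k + 1 < r * c + t →
        Stmt11Aux.wT lam (r * c + t) hR0 hnn T k
          ≤ Stmt11Aux.wT lam (r * c + t) hR0 hnn T (k + 1) := by
      intro k hk
      have hkn : k < r * c + t := by omega
      rw [Stmt11Aux.wT, dif_pos hkn, Stmt11Aux.wT, dif_pos hk]
      by_cases hcase : k % lam 0 + 1 < lam 0
      · have hk1eq : k + 1 = (k / lam 0) * lam 0 + (k % lam 0 + 1) := by
          have := Nat.div_add_mod' k (lam 0)
          omega
        have hmod : (k + 1) % lam 0 = k % lam 0 + 1 := by
          rw [hk1eq]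
          exact Stmt11Aux.mod_helper _ hcase
        have hdiv : (k + 1) / lam 0 = k / lam 0 := by
          rw [hk1eq]
          exact Stmt11Aux.div_helper _ hR0 hcase
        have hq : k / lam 0 < conj lam (k % lam 0 + 1) - conj (fun _ => 0) (k % lam 0 + 1) := by
          have := hnn (k + 1) hk
          rwa [hmod, hdiv] at this
        refine le_trans (Nat.not_lt.1 (hrow ⟨k % lam 0, Nat.mod_lt k hR0⟩ hcase
          ⟨k / lam 0, hnn k hkn⟩ ⟨k / lam 0, hq⟩ (hcc1 _ _ _))) ?_
        exact le_of_eq (Stmt11Aux.T_congr lam T hmod.symm hdiv.symm)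
      · have hmlt := Nat.mod_lt k hR0
        have hmodk : k % lam 0 = lam 0 - 1 := by omega
        have hmul : (k / lam 0 + 1) * lam 0 = (k / lam 0) * lam 0 + lam 0 := by ring
        have hk1eq : k + 1 = (k / lam 0 + 1) * lam 0 + 0 := by
          have := Nat.div_add_mod' k (lam 0)
          omega
        have hmod : (k + 1) % lam 0 = 0 := by
          rw [hk1eq]
          exact Stmt11Aux.mod_helper _ hR0
        have hdiv : (k + 1) / lam 0 = k / lam 0 + 1 := by
          rw [hk1eq]
          exact Stmt11Aux.div_helper _ hR0 hR0
        have hp : k / lam 0 < conj lam (lam 0 - 1) - conj (fun _ => 0) (lam 0 - 1) := by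
          have := hnn k hkn
          rwa [hmodk] at this
        have hq : k / lam 0 + 1 < conj lam 0 - conj (fun _ => 0) 0 := by
          have := hnn (k + 1) hk
          rwa [hmod, hdiv] at this
        have s1 : T ⟨k % lam 0, Nat.mod_lt k hR0⟩ ⟨k / lam 0, hnn k hkn⟩
            = T ⟨lam 0 - 1, Nat.sub_lt hR0 Nat.one_pos⟩ ⟨k / lam 0, hp⟩ :=
          Stmt11Aux.T_congr lam T hmodk rfl
        have s2 : T ⟨lam 0 - 1, Nat.sub_lt hR0 Nat.one_pos⟩ ⟨k / lam 0, hp⟩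
            ≤ T ⟨0, hR0⟩ ⟨k / lam 0 + 1, hq⟩ :=
          Nat.not_lt.1 (hwrap hR0 ⟨k / lam 0, hp⟩ ⟨k / lam 0 + 1, hq⟩ (hcc2 _ _ _))
        have s3 : T ⟨0, hR0⟩ ⟨k / lam 0 + 1, hq⟩
            = T ⟨(k + 1) % lam 0, Nat.mod_lt (k + 1) hR0⟩ ⟨(k + 1) / lam 0, hnn (k + 1) hk⟩ :=
          Stmt11Aux.T_congr lam T hmod.symm hdiv.symm
        rw [s1, ← s3]
        exact s2
    have hwcnt : ∀ v, ((Finset.range (r * c + t)).filter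
        (fun k => Stmt11Aux.wT lam (r * c + t) hR0 hnn T k = v)).card = mu v := by
      intro v
      rw [← Stmt11Aux.tabCount_eq lam (r * c + t) hR0 hnn T hidx' v]
      exact hcnt v
    refine ⟨fun k hk => Stmt11Aux.word_eq_aw hNex hmono hwcnt hk, hstrict⟩
  by_cases hmu0 : mu 0 ≤ r
  · -- unique tableau
    rw [if_pos hmu0, Nat.card_eq_one_iff_unique]
    have hmuR : ∀ v, mu v ≤ lam 0 := by
      intro v
      have h1 := Stmt11Aux.mu_le_mu_zero hmu.1 v
      rcases Nat.eq_zero_or_pos c with rfl | hc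
      · have h2 := Stmt11Aux.S_le hNex 1
        rw [hS1] at h2
        have hl0 : lam 0 = t := by rw [hR]; simp
        rw [hl0]
        omega
      · rw [hR, if_pos hc]
        omega
    constructor
    · -- subsingleton
      constructor
      rintro ⟨T1, h11, h12⟩ ⟨T2, h21, h22⟩
      apply Subtype.ext
      funext col p
      have e1 := (main T1 h11 h12).1 (p.1 * lam 0 + col.1) (hidxT col p)
      have e2 := (main T2 h21 h22).1 (p.1 * lam 0 + col.1) (hidxT col p)
      rw [hwTval T1 col p] at e1
      rw [hwTval T2 col p] at e2
      exact e1.trans e2.symm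
    · -- nonempty : canonical tableau
      refine ⟨⟨fun col p => Stmt11Aux.aw mu (p.1 * lam 0 + col.1), ⟨?_, ?_, ?_, ?_, ?_, ?_⟩, ?_⟩⟩
      · intro col hcol
        constructor
        · rw [hconj (col + 1) hcol, hconj col (by omega)]
          split_ifs <;> omega
        · simp [hcz]
      · intro col hcol
        rw [hcz]
        exact Nat.zero_le _
      · intro h0
        constructor
        · rw [hconj 0 h0, hconj (lam 0 - 1) (by omega)]
          split_ifs <;> omega
        · rw [hcz, hcz]
          omega
      · -- column strict
        intro col p q hpq
        have hpq' : p.1 + 1 ≤ q.1 := hpq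
        have h1 : q.1 * lam 0 + col.1 < r * c + t := hidxT col q
        have hmul : (p.1 + 1) * lam 0 = p.1 * lam 0 + lam 0 := by ring
        have hmul2 : (p.1 + 1) * lam 0 ≤ q.1 * lam 0 := Nat.mul_le_mul_right _ hpq'
        have hle : p.1 * lam 0 + col.1 + lam 0 ≤ q.1 * lam 0 + col.1 := by omega
        exact lt_of_lt_of_le
          (Stmt11Aux.aw_strict hNex hmuR (by omega))
          (Stmt11Aux.aw_mono hNex hle h1)
      · -- rows
        intro cc hc p q hcond
        have h1c := hcz cc.1
        have h2c := hcz (cc.1 + 1)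
        have hpq : p.1 = q.1 := by omega
        apply Nat.not_lt.2
        have h1 : q.1 * lam 0 + (cc.1 + 1) < r * c + t := hidxT ⟨cc.1 + 1, hc⟩ q
        have hqm : q.1 * lam 0 = p.1 * lam 0 := by rw [hpq]
        show Stmt11Aux.aw mu (p.1 * lam 0 + cc.1)
          ≤ Stmt11Aux.aw mu (q.1 * lam 0 + (cc.1 + 1))
        exact Stmt11Aux.aw_mono hNex (by omega) h1
      · -- wrap
        intro h0 p q hcond
        have h1c := hcz (lam 0 - 1)
        have h2c := hcz 0
        have hq1 : q.1 = p.1 + 1 := by omega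
        apply Nat.not_lt.2
        have h1 : q.1 * lam 0 + 0 < r * c + t := hidxT ⟨0, h0⟩ q
        have hqm : q.1 * lam 0 = p.1 * lam 0 + lam 0 := by rw [hq1]; ring
        show Stmt11Aux.aw mu (p.1 * lam 0 + (lam 0 - 1))
          ≤ Stmt11Aux.aw mu (q.1 * lam 0 + 0)
        exact Stmt11Aux.aw_mono hNex (by omega) h1
      · -- content
        intro v
        rw [Stmt11Aux.tabCount_eq lam (r * c + t) hR0 hnn _ hidx' v]
        have hfe : ∀ k ∈ Finset.range (r * c + t),
            (Stmt11Aux.wT lam (r * c + t) hR0 hnn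
              (fun col p => Stmt11Aux.aw mu (p.1 * lam 0 + col.1)) k = v
              ↔ Stmt11Aux.aw mu k = v) := by
          intro k hk
          simp only [Finset.mem_range] at hk
          simp only [Stmt11Aux.wT, dif_pos hk]
          rw [Nat.div_add_mod' k (lam 0)]
        rw [Finset.filter_congr hfe]
        exact Stmt11Aux.aw_counts hNex v
  · -- empty
    rw [if_neg hmu0]
    push_neg at hmu0
    have hmu0n : mu 0 ≤ r * c + t := by
      have := Stmt11Aux.S_le hNex 1
      rwa [hS1] at this
    rcases Nat.eq_zero_or_pos c with rfl | hc
    · exact absurd hmu0n (by omega)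
    · have hempty : IsEmpty {T : ∀ col : Fin (lam 0),
          Fin (conj lam col - conj (fun _ => 0) col) → ℕ //
          IsCylTab lam (fun _ => 0) 1 T ∧
          ∀ v : ℕ, tabCount lam (fun _ => 0) T v = mu v} := by
        refine ⟨fun x => ?_⟩
        obtain ⟨T, h1, h2⟩ := x
        have hw := main T h1 h2
        have hRr : lam 0 = r := by rw [hR, if_pos hc]
        have hrc : r * 1 ≤ r * c := Nat.mul_le_mul_left r hc
        have hrn : r < r * c + t := by omega
        have hlt := hw.2 0 (by rw [hRr]; omega)
        have e0 := hw.1 0 (by omega)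
        have er := hw.1 (0 + lam 0) (by rw [hRr]; omega)
        have ha0 : Stmt11Aux.aw mu 0 < 1 :=
          (Stmt11Aux.aw_char hNex (show 0 < r * c + t by omega) 1).2 (by rw [hS1]; omega)
        have har : Stmt11Aux.aw mu (0 + lam 0) < 1 :=
          (Stmt11Aux.aw_char hNex (show 0 + lam 0 < r * c + t by rw [hRr]; omega) 1).2
            (by rw [hS1, hRr]; omega)
        rw [e0, er] at hlt
        omega
      rw [Nat.card_eq_zero]
      exact Or.inl hempty
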